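/- Let μ₁, μ₂ > 0 and β, θ ∈ (0, π) with θ < β, where cos β = -ρ (|ρ| < 1) and tan θ = sin β/(μ₁/μ₂ + cos β). Then the larger branch point y⁺ = (μ₁ρ - μ₂ + √((μ₁ρ-μ₂)² + μ₁²(1-ρ²)))/(1-ρ²) satisfies y⁺ = μ₁(1 - cos(β - θ))/(sin β · sin(β - θ)). -/

import Mathlib

/-- With `β = arccos(-ρ)` and `θ ∈ (0, β)` such that
`tan θ = sin β / (μ₁/μ₂ + cos β)`, the larger branch point
`y⁺ = (μ₁ρ - μ₂ + √((μ₁ρ - μ₂)² + μ₁²(1 - ρ²)))/(1 - ρ²)` satisfies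
`y⁺ = μ₁ (1 - cos(β - θ)) / (sin β · sin(β - θ))`. -/
theorem branch_point_trig_formula (μ₁ μ₂ ρ β θ : ℝ)
    (hμ₁ : 0 < μ₁) (hμ₂ : 0 < μ₂) (hρ : |ρ| < 1)
    (hβ : β = Real.arccos (-ρ)) (hθ₀ : 0 < θ) (hθβ : θ < β)
    (htanθ : Real.tan θ = Real.sin β / (μ₁ / μ₂ + Real.cos β)) :
    (μ₁ * ρ - μ₂ + Real.sqrt ((μ₁ * ρ - μ₂) ^ 2 + μ₁ ^ 2 * (1 - ρ ^ 2))) / (1 - ρ ^ 2)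
      = μ₁ * (1 - Real.cos (β - θ)) / (Real.sin β * Real.sin (β - θ)) := by
  obtain ⟨hρ1, hρ2⟩ := abs_lt.mp hρ
  have hcos : Real.cos β = -ρ := by
    rw [hβ]; exact Real.cos_arccos (by linarith) (by linarith)
  have hβπ : β ≤ Real.pi := by rw [hβ]; exact Real.arccos_le_pi _
  have hβπ' : β < Real.pi := by
    rcases lt_or_eq_of_le hβπ with h | h
    · exact h
    · exfalso
      have : Real.cos β = -1 := by rw [h]; simp
      rw [hcos] at this; linarith
  have hβ0 : 0 < β := lt_trans hθ₀ hθβ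
  have hsin : 0 < Real.sin β := Real.sin_pos_of_pos_of_lt_pi hβ0 hβπ'
  have hs2 : Real.sin β ^ 2 = 1 - ρ ^ 2 := by
    have := Real.sin_sq_add_cos_sq β
    nlinarith
  have hsφ : 0 < Real.sin (β - θ) := Real.sin_pos_of_pos_of_lt_pi (by linarith) (by linarith)
  have hsθ : 0 < Real.sin θ :=
    Real.sin_pos_of_pos_of_lt_pi hθ₀ (by linarith)
  -- key relation: μ₁ sin θ = μ₂ sin (β - θ)
  have hkey : μ₁ * Real.sin θ = μ₂ * Real.sin (β - θ) := by
    rw [Real.sin_sub]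
    by_cases hc : Real.cos θ = 0
    · have htan0 : Real.tan θ = 0 := by
        rw [Real.tan_eq_sin_div_cos, hc, div_zero]
      have hz : Real.sin β / (μ₁ / μ₂ + Real.cos β) = 0 := by rw [← htanθ, htan0]
      rcases div_eq_zero_iff.mp hz with h1 | h2
      · linarith
      · have hcb : Real.cos β = -(μ₁ / μ₂) := by linarith
        rw [hc, hcb]
        field_simp
        ring
    · have hD : μ₁ / μ₂ + Real.cos β ≠ 0 := by
        intro h
        rw [h, div_zero, Real.tan_eq_sin_div_cos] at htanθ
        rcases div_eq_zero_iff.mp htanθ with h1 | h2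
        · linarith
        · exact hc h2
      rw [Real.tan_eq_sin_div_cos, div_eq_div_iff hc hD] at htanθ
      field_simp at htanθ
      linear_combination htanθ
  have hexp : Real.sin θ = Real.sin β * Real.cos (β - θ) - Real.cos β * Real.sin (β - θ) := by
    have h : θ = β - (β - θ) := by ring
    nth_rewrite 1 [h]
    rw [Real.sin_sub]
  have hB : (μ₁ * ρ - μ₂) * Real.sin (β - θ) = -(μ₁ * Real.sin β * Real.cos (β - θ)) := by
    have h := hkey
    rw [hexp] at h
    linear_combination h + (μ₁ * Real.sin (β - θ)) * hcos
  have hsqrt : Real.sqrt ((μ₁ * ρ - μ₂) ^ 2 + μ₁ ^ 2 * (1 - ρ ^ 2))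
      = μ₁ * Real.sin β / Real.sin (β - θ) := by
    have hval : (μ₁ * ρ - μ₂) ^ 2 + μ₁ ^ 2 * (1 - ρ ^ 2)
        = (μ₁ * Real.sin β / Real.sin (β - θ)) ^ 2 := by
      rw [div_pow, eq_div_iff (by positivity)]
      have hpyth := Real.sin_sq_add_cos_sq (β - θ)
      linear_combination ((μ₁ * ρ - μ₂) * Real.sin (β - θ) - μ₁ * Real.sin β * Real.cos (β - θ)) * hB
        + (μ₁ * Real.sin β) ^ 2 * hpyth - μ₁ ^ 2 * Real.sin (β - θ) ^ 2 * hs2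
    rw [hval, Real.sqrt_sq (by positivity)]
  rw [hsqrt, ← hs2]
  field_simp
  linear_combination hB
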